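/- Every prime ideal of C_bd(X,k) that is closed with respect to the supremum-norm topology is a maximal ideal. -/

import Mathlib

open Set Topology BoundedContinuousFunction

/-- An ultrafilter of the Boolean algebra `CO(X)` of clopen subsets of `X`: a family of
clopen sets not containing `∅`, closed under binary intersections, upward closed (within
clopen sets), and containing `U` or `Uᶜ` for every clopen `U`. -/
structure ClopenUltrafilter (X : Type*) [TopologicalSpace X] where
  sets : Set (Set X)
  isClopen_of_mem : ∀ U ∈ sets, IsClopen U
  empty_not_mem : ∅ ∉ sets
  inter_mem : ∀ U ∈ sets, ∀ V ∈ sets, U ∩ V ∈ sets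
  mem_of_superset : ∀ U ∈ sets, ∀ V : Set X, IsClopen V → U ⊆ V → V ∈ sets
  mem_or_compl_mem : ∀ U : Set X, IsClopen U → U ∈ sets ∨ Uᶜ ∈ sets

/-- The topology on `UF(X)` with open basis the sets `{F : U ∈ F}` for `U` clopen. -/
instance (X : Type*) [TopologicalSpace X] : TopologicalSpace (ClopenUltrafilter X) :=
  TopologicalSpace.generateFrom
    {S | ∃ U : Set X, IsClopen U ∧ S = {F : ClopenUltrafilter X | U ∈ F.sets}}

/-- The principal ultrafilter of clopen sets at a point `x`. -/
def principalCU (X : Type*) [TopologicalSpace X] (x : X) : ClopenUltrafilter X where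
  sets := {U : Set X | IsClopen U ∧ x ∈ U}
  isClopen_of_mem := fun _ hU => hU.1
  empty_not_mem := fun h => Set.notMem_empty x h.2
  inter_mem := fun U hU V hV => ⟨hU.1.inter hV.1, hU.2, hV.2⟩
  mem_of_superset := fun U hU V hV hUV => ⟨hV, hUV hU.2⟩
  mem_or_compl_mem := fun U hU => by
    by_cases hx : x ∈ U
    · exact Or.inl ⟨hU, hx⟩
    · exact Or.inr ⟨hU.compl, hx⟩

/-- A cluster point of an ultrafilter of clopen sets: a point all of whose clopen
neighbourhoods belong to the ultrafilter. -/
def ClopenUltrafilter.IsClusterPoint {X : Type*} [TopologicalSpace X]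
    (F : ClopenUltrafilter X) (x : X) : Prop :=
  ∀ U : Set X, IsClopen U → x ∈ U → U ∈ F.sets

/-- The indicator function of a clopen set, as a bounded continuous `k`-valued function. -/
noncomputable def indicatorBCF {X : Type*} [TopologicalSpace X] (k : Type*) [NormedField k]
    {U : Set X} (hU : IsClopen U) : BoundedContinuousFunction X k where
  toFun := U.indicator 1
  continuous_toFun := continuous_indicator (by simp [hU]) continuous_const.continuousOn
  map_bounded' := ⟨1, fun x y => by
    by_cases hx : x ∈ U <;> by_cases hy : y ∈ U <;>
      simp [hx, hy, dist_eq_norm, Set.indicator_of_mem, Set.indicator_of_notMem]⟩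

/-- The family `F_m = {U ∈ CO(X) : 1_U ∉ m}` attached to an ideal `m` of `C_bd(X,k)`. -/
def idealUF {X : Type*} [TopologicalSpace X] (k : Type*) [NormedField k]
    (m : Ideal (BoundedContinuousFunction X k)) : Set (Set X) :=
  {U : Set X | ∃ hU : IsClopen U, indicatorBCF k hU ∉ m}

/-- `‖f‖_F = inf_{U ∈ F} sup_{x ∈ U} ‖f x‖`. -/
noncomputable def ufSeminorm {X : Type*} [TopologicalSpace X] (k : Type*) [NormedField k]
    (F : ClopenUltrafilter X) (f : BoundedContinuousFunction X k) : ℝ :=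
  ⨅ U ∈ F.sets, ⨆ x ∈ U, ‖f x‖


section Aux

variable {X : Type*} [TopologicalSpace X] (k : Type*) [NormedField k]

lemma indicatorBCF_apply {U : Set X} (hU : IsClopen U) (x : X) :
    indicatorBCF k hU x = U.indicator 1 x := rfl

lemma indicatorBCF_mul_compl {U : Set X} (hU : IsClopen U) :
    indicatorBCF k hU * indicatorBCF k hU.compl = 0 := by
  ext x
  by_cases hx : x ∈ U <;>
    simp [indicatorBCF_apply, hx, Set.indicator_of_mem, Set.indicator_of_notMem]

lemma isClopen_norm_le [IsUltrametricDist k] (f : BoundedContinuousFunction X k) {ε : ℝ}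
    (hε : 0 < ε) : IsClopen {x | ‖f x‖ ≤ ε} := by
  have : {x | ‖f x‖ ≤ ε} = f ⁻¹' (Metric.closedBall 0 ε) := by
    ext x; simp [Metric.mem_closedBall, dist_zero_right]
  rw [this]
  exact (IsUltrametricDist.isClopen_closedBall (0:k) hε.ne').preimage f.continuous

end Aux

/-- Every prime ideal of `C_bd(X,k)` that is closed with respect to the
supremum-norm topology is a maximal ideal. -/
theorem isMaximal_of_isClosed_isPrime {X : Type*} [TopologicalSpace X]
    (k : Type*) [NormedField k] [CompleteSpace k] [IsUltrametricDist k]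
    (m : Ideal (BoundedContinuousFunction X k)) (hm : m.IsPrime)
    (hc : IsClosed (m : Set (BoundedContinuousFunction X k))) : m.IsMaximal  := by
  classical
  have hne : (1 : BoundedContinuousFunction X k) ∉ m := fun h =>
    hm.ne_top ((Ideal.eq_top_iff_one m).mpr h)
  rw [Ideal.isMaximal_iff]
  refine ⟨hne, fun J f hmJ hfm hfJ => ?_⟩
  by_cases hcase : ∀ ε : ℝ, 0 < ε → ∃ U : Set X, ∃ hU : IsClopen U,
      indicatorBCF k hU ∉ m ∧ ∀ x ∈ U, ‖f x‖ ≤ ε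
  · -- then f is in the closure of m, hence in m: contradiction
    exfalso
    apply hfm
    have hfc : f ∈ closure (m : Set (BoundedContinuousFunction X k)) := by
      rw [Metric.mem_closure_iff]
      intro ε hε
      obtain ⟨U, hU, h1, h2⟩ := hcase (ε/2) (by linarith)
      have hUc : indicatorBCF k hU.compl ∈ m := by
        rcases hm.mem_or_mem (show indicatorBCF k hU * indicatorBCF k hU.compl ∈ m by
          rw [indicatorBCF_mul_compl]; exact m.zero_mem) with h | h
        · exact absurd h h1
        · exact h
      refine ⟨f * indicatorBCF k hU.compl, m.mul_mem_left f hUc, ?_⟩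
      have hsub : f - f * indicatorBCF k hU.compl = f * indicatorBCF k hU := by
        ext x
        by_cases hx : x ∈ U <;>
          simp [indicatorBCF_apply, hx, Set.indicator_of_mem, Set.indicator_of_notMem]
      have hle : ‖f - f * indicatorBCF k hU.compl‖ ≤ ε/2 := by
        rw [hsub]
        refine (BoundedContinuousFunction.norm_le (by linarith)).mpr fun x => ?_
        by_cases hx : x ∈ U
        · simpa [indicatorBCF_apply, hx, Set.indicator_of_mem] using h2 x hx
        · simp [indicatorBCF_apply, hx, Set.indicator_of_notMem, le_of_lt (by linarith : (0:ℝ) < ε/2)]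
      calc dist f (f * indicatorBCF k hU.compl) = ‖f - f * indicatorBCF k hU.compl‖ :=
            dist_eq_norm _ _
        _ ≤ ε/2 := hle
        _ < ε := by linarith
    rwa [hc.closure_eq] at hfc
  · push_neg at hcase
    obtain ⟨ε, hε, hbig⟩ := hcase
    set U : Set X := {x | ‖f x‖ ≤ ε} with hUdef
    have hU : IsClopen U := isClopen_norm_le k f hε
    have h1U : indicatorBCF k hU ∈ m := by
      by_contra h
      obtain ⟨x, hxU, hx⟩ := hbig U hU h
      exact absurd hxU (not_le.mpr hx)
    -- the "inverse off U" function
    have hcont : Continuous (fun x => if x ∈ U then (0:k) else (f x)⁻¹) := by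
      rw [continuous_iff_continuousAt]
      intro x
      by_cases hx : x ∈ U
      · have heq : (fun y => if y ∈ U then (0:k) else (f y)⁻¹) =ᶠ[𝓝 x] fun _ => (0:k) :=
          Filter.eventuallyEq_of_mem (hU.isOpen.mem_nhds hx) fun y hy => if_pos hy
        exact ContinuousAt.congr continuousAt_const heq.symm
      · have hfx : f x ≠ 0 := by
          have : ε < ‖f x‖ := not_le.mp hx
          exact norm_pos_iff.mp (hε.trans this)
        have heq : (fun y => if y ∈ U then (0:k) else (f y)⁻¹) =ᶠ[𝓝 x] fun y => (f y)⁻¹ :=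
          Filter.eventuallyEq_of_mem (hU.compl.isOpen.mem_nhds hx) fun y hy => if_neg hy
        exact ContinuousAt.congr (f.continuous.continuousAt.inv₀ hfx) heq.symm
    have hbd : ∀ x, ‖if x ∈ U then (0:k) else (f x)⁻¹‖ ≤ ε⁻¹ := by
      intro x
      by_cases hx : x ∈ U
      · simp [hx, le_of_lt (inv_pos.mpr hε)]
      · have hlt : ε < ‖f x‖ := not_le.mp hx
        rw [if_neg hx, norm_inv]
        exact inv_anti₀ hε hlt.le
    set g : BoundedContinuousFunction X k :=
      BoundedContinuousFunction.ofNormedAddCommGroup _ hcont ε⁻¹ hbd with hgdef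
    have hg_apply : ∀ x, g x = if x ∈ U then (0:k) else (f x)⁻¹ := fun x => rfl
    have hid : f * g + indicatorBCF k hU = 1 := by
      ext x
      by_cases hx : x ∈ U
      · simp [hg_apply, indicatorBCF_apply, hx, Set.indicator_of_mem]
      · have hfx : f x ≠ 0 := norm_pos_iff.mp (hε.trans (not_le.mp hx))
        simp [hg_apply, indicatorBCF_apply, hx, Set.indicator_of_notMem, mul_inv_cancel₀ hfx]
    have : (1 : BoundedContinuousFunction X k) ∈ J := by
      rw [← hid]
      exact J.add_mem (J.mul_mem_right g hfJ) (hmJ h1U)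
    exact this
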